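/- Let a Polish group G act topometrically on a Polish topometric space X, and suppose that for every ε > 0 there exists x̄ ∈ X^n with (G·x̄)_ε comeagre in X^n. Then there exists x̄ ∈ X^n whose ∂-closure of G·x̄ is comeagre in X^n. -/

import Mathlib

/-- The supremum metric on tuples induced by a metric `D`. -/
noncomputable def supMet {X : Type*} (D : X → X → ℝ) {n : ℕ} (x y : Fin n → X) : ℝ :=
  ⨆ i : Fin n, D (x i) (y i)

/-- The orbit of a tuple under the diagonal action associated to `a : G → X → X`. -/
def orbitTup {G X : Type*} (a : G → X → X) {n : ℕ} (x : Fin n → X) : Set (Fin n → X) :=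
  {y | ∃ g : G, ∀ i, a g (x i) = y i}

/-- The open `ε`-enlargement of a set of tuples with respect to the sup metric of `D`. -/
def encl {X : Type*} (D : X → X → ℝ) {n : ℕ} (ε : ℝ) (A : Set (Fin n → X)) :
    Set (Fin n → X) :=
  {x | ∃ y ∈ A, supMet D x y < ε}

/-- The closure of a set of tuples in the sup metric of `D`. -/
def metCl {X : Type*} (D : X → X → ℝ) {n : ℕ} (A : Set (Fin n → X)) :
    Set (Fin n → X) :=
  {x | ∀ ε > (0 : ℝ), ∃ y ∈ A, supMet D x y < ε}

lemma supMet_le_of_nonneg {X : Type*} (D : X → X → ℝ) {n : ℕ} {x y : Fin n → X} {r : ℝ}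
    (hr : 0 ≤ r) (h : ∀ i, D (x i) (y i) ≤ r) : supMet D x y ≤ r :=
  Real.iSup_le h hr

lemma le_supMet {X : Type*} (D : X → X → ℝ) {n : ℕ} (x y : Fin n → X) (i : Fin n) :
    D (x i) (y i) ≤ supMet D x y := by
  unfold supMet
  exact le_ciSup (f := fun j => D (x j) (y j)) (Set.Finite.bddAbove (Set.finite_range _)) i

/-- If for every `ε > 0` some tuple `x : Xⁿ` has `(G·x)_ε` comeagre in `Xⁿ`,
then some tuple has an orbit whose `D`-closure is comeagre in `Xⁿ`. -/
theorem stmt_5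
    {G X : Type*} [Group G] [TopologicalSpace G] [IsTopologicalGroup G] [PolishSpace G]
    [TopologicalSpace X] [PolishSpace X]
    (D : X → X → ℝ)
    (hD_eq : ∀ x y : X, D x y = 0 ↔ x = y)
    (hD_symm : ∀ x y : X, D x y = D y x)
    (hD_tri : ∀ x y z : X, D x z ≤ D x y + D y z)
    (hD_ref : ∀ U : Set X, IsOpen U → ∀ x ∈ U, ∃ ε > (0 : ℝ), {y | D x y < ε} ⊆ U)
    (hD_lsc : ∀ r : ℝ, IsClosed {p : X × X | D p.1 p.2 ≤ r})
    (a : G → X → X)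
    (ha_one : ∀ x : X, a 1 x = x)
    (ha_mul : ∀ g h : G, ∀ x : X, a (g * h) x = a g (a h x))
    (ha_cont : Continuous fun p : G × X => a p.1 p.2)
    (ha_iso : ∀ g : G, ∀ x y : X, D (a g x) (a g y) = D x y)
    {n : ℕ}
    (h : ∀ ε > (0 : ℝ), ∃ x : Fin n → X,
      encl D ε (orbitTup a x) ∈ residual (Fin n → X)) :
    ∃ x : Fin n → X, metCl D (orbitTup a x) ∈ residual (Fin n → X) := by
  -- D is nonnegative
  have hDnn : ∀ x y : X, 0 ≤ D x y := by
    intro x y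
    nlinarith [hD_tri x y x, (hD_eq x x).2 rfl, hD_symm x y]
  have hsupnn : ∀ x y : Fin n → X, 0 ≤ supMet D x y := by
    intro x y
    exact Real.iSup_nonneg fun i => hDnn _ _
  have hsup_tri : ∀ x y z : Fin n → X, supMet D x z ≤ supMet D x y + supMet D y z := by
    intro x y z
    refine supMet_le_of_nonneg D (add_nonneg (hsupnn _ _) (hsupnn _ _)) fun i => ?_
    exact (hD_tri _ (y i) _).trans (add_le_add (le_supMet D x y i) (le_supMet D y z i))
  -- choose witnesses
  have hεpos : ∀ k : ℕ, (0 : ℝ) < (1/2) ^ (k + 1) := fun k => by positivity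
  choose x hx using fun k : ℕ => h ((1/2) ^ (k + 1)) (hεpos k)
  -- the intersection of the comeagre enlargements is comeagre
  have hInter : (⋂ k : ℕ, encl D ((1/2) ^ (k + 1)) (orbitTup a (x k))) ∈
      residual (Fin n → X) := countable_iInter_mem.2 hx
  -- Xⁿ is nonempty and Baire, so the intersection is nonempty
  have hne : Nonempty (Fin n → X) := ⟨(h 1 one_pos).choose⟩
  letI := TopologicalSpace.upgradeIsCompletelyMetrizable (Fin n → X)
  obtain ⟨z, hz⟩ := (dense_of_mem_residual hInter).nonempty
  refine ⟨z, Filter.mem_of_superset hInter ?_⟩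
  -- every point of the intersection is in the metric closure of the orbit of z
  intro u hu δ hδ
  simp only [Set.mem_iInter] at hu hz
  -- pick k with (1/2)^k < δ
  obtain ⟨k, hk⟩ := exists_pow_lt_of_lt_one hδ (by norm_num : (1/2 : ℝ) < 1)
  obtain ⟨y, ⟨g, hg⟩, hdy⟩ := hu k
  obtain ⟨y', ⟨g', hg'⟩, hdy'⟩ := hz k
  refine ⟨fun i => a (g * g'⁻¹) (z i), ⟨g * g'⁻¹, fun i => rfl⟩, ?_⟩
  have key : supMet D y (fun i => a (g * g'⁻¹) (z i)) = supMet D y' z := by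
    unfold supMet
    congr 1
    funext i
    have e1 : a (g' * g⁻¹) (y i) = y' i := by
      rw [← hg i, ← ha_mul, ← hg']
      congr 1
      group
    have e2 : a (g' * g⁻¹) (a (g * g'⁻¹) (z i)) = z i := by
      rw [← ha_mul]
      have : g' * g⁻¹ * (g * g'⁻¹) = 1 := by group
      rw [this, ha_one]
    calc D (y i) (a (g * g'⁻¹) (z i))
        = D (a (g' * g⁻¹) (y i)) (a (g' * g⁻¹) (a (g * g'⁻¹) (z i))) := (ha_iso _ _ _).symm
      _ = D (y' i) (z i) := by rw [e1, e2]
  have htri := hsup_tri u y (fun i => a (g * g'⁻¹) (z i))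
  rw [key] at htri
  have hsymm : supMet D y' z = supMet D z y' := by
    unfold supMet; congr 1; funext i; exact hD_symm _ _
  rw [hsymm] at htri
  calc supMet D u (fun i => a (g * g'⁻¹) (z i))
      ≤ supMet D u y + supMet D z y' := htri
    _ < (1/2) ^ (k + 1) + (1/2) ^ (k + 1) := add_lt_add hdy hdy'
    _ = (1/2) ^ k := by ring
    _ < δ := hk
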